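/- For δ ∈ (0,1), the cooperation present value α²/(2(2c₂-αc₁)) · 1/(1-δ) is at least the deviation present value α²(5c₂-2αc₁)/(4(2c₂-αc₁)²) + δ·α²(6c₂-αc₁)/(2(4c₂-αc₁)²(1-δ)) if and only if δ ≥ (4c₂-αc₁)² / ((4c₂-αc₁)² + 8c₂(2c₂-αc₁)). -/

import Mathlib

theorem trigger_incentive (α c₁ c₂ δ : ℝ) (hα : 0 < α)
    (hc₁ : c₁ ∈ Set.Icc 0 (2 / α)) (hc₂ : c₂ ∈ Set.Icc (3/2 : ℝ) 2)
    (hδ : δ ∈ Set.Ioo (0 : ℝ) 1) :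
    α^2 / (2 * (2 * c₂ - α * c₁)) * (1 / (1 - δ)) ≥
      α^2 * (5 * c₂ - 2 * α * c₁) / (4 * (2 * c₂ - α * c₁)^2) +
        δ * (α^2 * (6 * c₂ - α * c₁) / (2 * (4 * c₂ - α * c₁)^2 * (1 - δ))) ↔
    δ ≥ (4 * c₂ - α * c₁)^2 /
      ((4 * c₂ - α * c₁)^2 + 8 * c₂ * (2 * c₂ - α * c₁)) := by
  obtain ⟨hc₁0, hc₁2⟩ := hc₁
  obtain ⟨hc₂l, hc₂u⟩ := hc₂
  obtain ⟨hδ0, hδ1⟩ := hδ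
  have hαc : α * c₁ ≤ 2 := by
    have := (le_div_iff₀ hα).mp hc₁2
    linarith
  have hA : 0 < 2 * c₂ - α * c₁ := by nlinarith
  have hB : 0 < 4 * c₂ - α * c₁ := by nlinarith
  have h1δ : 0 < 1 - δ := by linarith
  have hc₂0 : 0 < c₂ := by linarith
  have key : α^2 / (2 * (2 * c₂ - α * c₁)) * (1 / (1 - δ)) -
      (α^2 * (5 * c₂ - 2 * α * c₁) / (4 * (2 * c₂ - α * c₁)^2) +
        δ * (α^2 * (6 * c₂ - α * c₁) / (2 * (4 * c₂ - α * c₁)^2 * (1 - δ)))) =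
      c₂ * α^2 * (δ * ((4 * c₂ - α * c₁)^2 + 8 * c₂ * (2 * c₂ - α * c₁)) -
        (4 * c₂ - α * c₁)^2) /
      (4 * (2 * c₂ - α * c₁)^2 * (4 * c₂ - α * c₁)^2 * (1 - δ)) := by
    have hA' := hA.ne'
    have hB' := hB.ne'
    have h1δ' := h1δ.ne'
    have hB'' : c₂ * 4 - α * c₁ ≠ 0 := (by linarith : (0:ℝ) < c₂ * 4 - α * c₁).ne'
    field_simp
    ring
  have hS : 0 < (4 * c₂ - α * c₁)^2 + 8 * c₂ * (2 * c₂ - α * c₁) := by positivity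
  rw [ge_iff_le, ← sub_nonneg, key, ge_iff_le, div_le_iff₀ hS,
    le_div_iff₀ (by positivity : (0:ℝ) < 4 * (2 * c₂ - α * c₁)^2 * (4 * c₂ - α * c₁)^2 * (1 - δ))]
  constructor
  · intro h
    nlinarith [mul_pos hc₂0 (pow_pos hα 2)]
  · intro h
    nlinarith [mul_pos hc₂0 (pow_pos hα 2)]
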